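/- Optimality chain for the choice N = N_δ: assume the sequence {μ_k/ξ_k} is monotone nonincreasing with μ_k/ξ_k → 0, and let δ > 0 satisfy δ < 1/ξ_0 (so N_δ ≥ 1). Then μ_{N_δ}/ξ_{N_δ} ≤ R_δ(A,W)_H ≤ R_{N_δ,δ}(A,W)_H ≤ ε_δ(A,W,G̃_{N_δ},Ψ̃_{N_δ})_H ≤ ( μ_{N_δ}²/ξ_{N_δ}² + μ_{N_δ−1}²/ξ_{N_δ−1}² )^{1/2}. -/

import Mathlib

noncomputable section

open Filter
open scoped ENNReal RealInnerProductSpace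

variable {H : Type*} [NormedAddCommGroup H] [InnerProductSpace ℝ H] [CompleteSpace H]

/-- `f` belongs to the source set `W`. -/
def MemW (w : ℕ → H) (ξ : ℕ → ℝ) (f : H) : Prop :=
  Summable fun k => ξ k ^ 2 * ⟪f, w k⟫ ^ 2

/-- The `W`-norm of `f`. -/
def normW (w : ℕ → H) (ξ : ℕ → ℝ) (f : H) : ℝ :=
  Real.sqrt (∑' k, ξ k ^ 2 * ⟪f, w k⟫ ^ 2)

/-- The unbounded operator `A`, defined spectrally by `A f = ∑ μ_k ⟨f, w_k⟩ w_k`. -/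
def opA (w : ℕ → H) (μ : ℕ → ℝ) (f : H) : H :=
  ∑' k, (μ k * ⟪f, w k⟫) • w k

/-- The worst case recovery error `ε_δ(A, W, G, Ψ)_H` of the pair `(G, Ψ)`. -/
def recErr (w : ℕ → H) (μ ξ : ℕ → ℝ) (δ : ℝ) {N : ℕ}
    (G : H → Fin N → ℝ) (Ψ : (Fin N → ℝ) → H) : ℝ≥0∞ :=
  ⨆ (f : H) (_ : MemW w ξ f ∧ normW w ξ f ≤ 1) (fδ : H) (_ : ‖f - fδ‖ ≤ δ),
    ENNReal.ofReal ‖opA w μ f - Ψ (G fδ)‖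

/-- The `(N,δ)`-optimal recovery error `R_{N,δ}(A, W)_H`. -/
def Ropt (w : ℕ → H) (μ ξ : ℕ → ℝ) (δ : ℝ) (N : ℕ) : ℝ≥0∞ :=
  ⨅ (G : H → Fin N → ℝ) (_ : Continuous G) (Ψ : (Fin N → ℝ) → H),
    recErr w μ ξ δ G Ψ

/-- The `δ`-optimal recovery error `R_δ(A, W)_H`. -/
def RoptAll (w : ℕ → H) (μ ξ : ℕ → ℝ) (δ : ℝ) : ℝ≥0∞ :=
  ⨅ N : ℕ, Ropt w μ ξ δ N

/-- The critical index `N_δ = min {N ≥ 0 : ξ_N ≥ 1/δ}`. -/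
def Ncrit (ξ : ℕ → ℝ) (δ : ℝ) : ℕ := sInf {N : ℕ | 1 / δ ≤ ξ N}

/-- The information map of the truncation method: the first `N` Fourier coefficients. -/
def Gtrunc (w : ℕ → H) (N : ℕ) (f : H) : Fin N → ℝ := fun k => ⟪f, w k⟫

/-- The recovery algorithm of the truncation method. -/
def Psitrunc (w : ℕ → H) (μ : ℕ → ℝ) (N : ℕ) (x : Fin N → ℝ) : H :=
  ∑ k : Fin N, (μ k * x k) • w k

/-- the Hilbert basis -/
noncomputable def hb (w : ℕ → H) (hw_on : Orthonormal ℝ w)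
    (hw_dense : Dense (Submodule.span ℝ (Set.range w) : Set H)) : HilbertBasis ℕ ℝ H :=
  HilbertBasis.mk hw_on (by
    rw [top_le_iff, ← Submodule.dense_iff_topologicalClosure_eq_top]; exact hw_dense)

lemma hb_coe (w : ℕ → H) (hw_on : Orthonormal ℝ w)
    (hw_dense : Dense (Submodule.span ℝ (Set.range w) : Set H)) :
    ⇑(hb w hw_on hw_dense) = w := HilbertBasis.coe_mk _ _

lemma hasSum_of_sq_summable (w : ℕ → H) (hw_on : Orthonormal ℝ w)
    (hw_dense : Dense (Submodule.span ℝ (Set.range w) : Set H))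
    (c : ℕ → ℝ) (hc : Summable fun k => c k ^ 2) :
    HasSum (fun k => c k • w k) (∑' k, c k • w k) := by
  have hm : Memℓp c 2 := by
    apply memℓp_gen
    convert hc using 2 with k
    simp [Real.norm_eq_abs, sq_abs]
  have h : HasSum (fun i => c i • (hb w hw_on hw_dense) i)
      ((hb w hw_on hw_dense).repr.symm ⟨c, hm⟩) :=
    (hb w hw_on hw_dense).hasSum_repr_symm ⟨c, hm⟩
  rw [hb_coe w hw_on hw_dense] at h
  exact h.tsum_eq ▸ h

lemma coef_of_hasSum (w : ℕ → H) (hw_on : Orthonormal ℝ w) {c : ℕ → ℝ} {g : H}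
    (h : HasSum (fun k => c k • w k) g) (k : ℕ) : ⟪w k, g⟫ = c k := by
  have h2 := h.mapL (innerSL ℝ (w k))
  have h3 : (fun j => (innerSL ℝ (w k)) (c j • w j)) = fun j => if j = k then c k else 0 := by
    funext j
    rcases eq_or_ne j k with rfl | hjk
    · simp [real_inner_smul_right, orthonormal_iff_ite.mp hw_on j j, hw_on.1 j]
    · simp [real_inner_smul_right, hjk, hw_on.2 (Ne.symm hjk)]
  rw [h3] at h2
  exact h2.unique (hasSum_ite_eq k (c k))

lemma norm_sq_eq_tsum (w : ℕ → H) (hw_on : Orthonormal ℝ w)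
    (hw_dense : Dense (Submodule.span ℝ (Set.range w) : Set H)) (e : H) :
    ‖e‖ ^ 2 = ∑' k, ⟪w k, e⟫ ^ 2 := by
  have := (hb w hw_on hw_dense).tsum_inner_mul_inner e e
  rw [hb_coe] at this
  rw [← real_inner_self_eq_norm_sq, ← this]
  congr 1; funext k; rw [real_inner_comm e (w k), sq]

lemma summable_coef_sq (w : ℕ → H) (hw_on : Orthonormal ℝ w)
    (hw_dense : Dense (Submodule.span ℝ (Set.range w) : Set H)) (e : H) :
    Summable fun k => ⟪w k, e⟫ ^ 2 := by
  have := (hb w hw_on hw_dense).summable_inner_mul_inner e e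
  rw [hb_coe] at this
  refine this.congr fun k => ?_
  rw [real_inner_comm e (w k), sq]


lemma opA_hasSum (w : ℕ → H) (hw_on : Orthonormal ℝ w)
    (hw_dense : Dense (Submodule.span ℝ (Set.range w) : Set H))
    (μ ξ : ℕ → ℝ) (hμpos : ∀ k, 0 < μ k) (hξpos : ∀ k, 0 < ξ k)
    (hanti : Antitone fun k => μ k / ξ k)
    (f : H) (hf : MemW w ξ f) :
    HasSum (fun k => (μ k * ⟪f, w k⟫) • w k) (opA w μ f) := by
  refine hasSum_of_sq_summable w hw_on hw_dense _ ?_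
  have key : ∀ k, (μ k * ⟪f, w k⟫) ^ 2 ≤ (μ 0 / ξ 0) ^ 2 * (ξ k ^ 2 * ⟪f, w k⟫ ^ 2) := by
    intro k
    have hk := (hξpos k).ne'
    have h1 : (μ k * ⟪f, w k⟫) ^ 2 = (μ k / ξ k) ^ 2 * (ξ k ^ 2 * ⟪f, w k⟫ ^ 2) := by
      field_simp
    have h2 : (μ k / ξ k) ^ 2 ≤ (μ 0 / ξ 0) ^ 2 :=
      pow_le_pow_left₀ (div_nonneg (hμpos k).le (hξpos k).le) (hanti (Nat.zero_le k)) 2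
    rw [h1]
    exact mul_le_mul_of_nonneg_right h2 (by positivity)
  exact Summable.of_nonneg_of_le (fun k => sq_nonneg _) key (hf.mul_left _)

lemma coef_err (w : ℕ → H) (hw_on : Orthonormal ℝ w)
    (hw_dense : Dense (Submodule.span ℝ (Set.range w) : Set H))
    (μ ξ : ℕ → ℝ) (hμpos : ∀ k, 0 < μ k) (hξpos : ∀ k, 0 < ξ k)
    (hanti : Antitone fun k => μ k / ξ k)
    (N : ℕ) (f fδ : H) (hf : MemW w ξ f) (k : ℕ) :
    ⟪w k, opA w μ f - Psitrunc w μ N (Gtrunc w N fδ)⟫ =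
      (if k < N then μ k * ⟪f - fδ, w k⟫ else μ k * ⟪f, w k⟫) := by
  rw [inner_sub_right]
  have h1 : ⟪w k, opA w μ f⟫ = μ k * ⟪f, w k⟫ :=
    coef_of_hasSum w hw_on (opA_hasSum w hw_on hw_dense μ ξ hμpos hξpos hanti f hf) k
  have h2 : ⟪w k, Psitrunc w μ N (Gtrunc w N fδ)⟫ =
      (if k < N then μ k * ⟪fδ, w k⟫ else 0) := by
    rw [Psitrunc, inner_sum]
    simp only [real_inner_smul_right, Gtrunc]
    by_cases hk : k < N
    · rw [Finset.sum_eq_single (⟨k, hk⟩ : Fin N)]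
      · simp [orthonormal_iff_ite.mp hw_on k k, hk, hw_on.1 k]
      · intro j _ hj
        have : (j : ℕ) ≠ k := by
          intro hc; exact hj (by ext; exact hc)
        simp [orthonormal_iff_ite.mp hw_on k j, this.symm]
      · simp
    · rw [if_neg hk, Finset.sum_eq_zero]
      intro j _
      have : (j : ℕ) ≠ k := fun hc => hk (hc ▸ j.isLt)
      simp [orthonormal_iff_ite.mp hw_on k j, this.symm]
  rw [h1, h2]
  by_cases hk : k < N
  · simp [hk, inner_sub_left]; ring
  · simp [hk]

set_option maxHeartbeats 1000000 in
lemma errBound (w : ℕ → H) (hw_on : Orthonormal ℝ w)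
    (hw_dense : Dense (Submodule.span ℝ (Set.range w) : Set H))
    (μ ξ : ℕ → ℝ) (hμmono : Monotone μ) (hμpos : ∀ k, 0 < μ k) (hξpos : ∀ k, 0 < ξ k)
    (hanti : Antitone fun k => μ k / ξ k)
    (N : ℕ) (hN1 : 1 ≤ N) (δ : ℝ) (hδ : 0 < δ) (hδle : δ ≤ 1 / ξ (N - 1))
    (f fδ : H) (hf : MemW w ξ f) (hfW : normW w ξ f ≤ 1) (hd : ‖f - fδ‖ ≤ δ) :
    ‖opA w μ f - Psitrunc w μ N (Gtrunc w N fδ)‖ ≤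
      Real.sqrt ((μ N / ξ N) ^ 2 + (μ (N - 1) / ξ (N - 1)) ^ 2) := by
  set e := opA w μ f - Psitrunc w μ N (Gtrunc w N fδ) with he
  set a : ℕ → ℝ := fun k => if k < N then μ k * ⟪f - fδ, w k⟫ else μ k * ⟪f, w k⟫ with haa
  have ha : ∀ k, ⟪w k, e⟫ = a k := fun k =>
    coef_err w hw_on hw_dense μ ξ hμpos hξpos hanti N f fδ hf k
  have hnorm : ‖e‖ ^ 2 = ∑' k, a k ^ 2 := by
    rw [norm_sq_eq_tsum w hw_on hw_dense e]
    exact tsum_congr fun k => by rw [ha k]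
  have hsum : Summable fun k => a k ^ 2 :=
    (summable_congr fun k => by rw [ha k]).mp (summable_coef_sq w hw_on hw_dense e)
  have hsplit : ∑' k, a k ^ 2 =
      (∑ k ∈ Finset.range N, a k ^ 2) + ∑' j, a (j + N) ^ 2 :=
    (Summable.sum_add_tsum_nat_add N hsum).symm
  -- head estimate
  have hhead : (∑ k ∈ Finset.range N, a k ^ 2) ≤ (μ (N - 1) / ξ (N - 1)) ^ 2 := by
    have h1 : ∀ k ∈ Finset.range N, a k ^ 2 ≤ μ (N - 1) ^ 2 * ⟪f - fδ, w k⟫ ^ 2 := by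
      intro k hk
      rw [Finset.mem_range] at hk
      have hak : a k = μ k * ⟪f - fδ, w k⟫ := if_pos hk
      have hμk : μ k ≤ μ (N - 1) := hμmono (by omega)
      rw [hak, mul_pow]
      exact mul_le_mul_of_nonneg_right
        (pow_le_pow_left₀ (hμpos k).le hμk 2) (sq_nonneg _)
    have hBessel : (∑ k ∈ Finset.range N, ⟪f - fδ, w k⟫ ^ 2) ≤ ‖f - fδ‖ ^ 2 := by
      have := hw_on.sum_inner_products_le (s := Finset.range N) (f - fδ)
      convert this using 2 with k
      rw [real_inner_comm, Real.norm_eq_abs, sq_abs]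
    calc (∑ k ∈ Finset.range N, a k ^ 2)
        ≤ ∑ k ∈ Finset.range N, μ (N - 1) ^ 2 * ⟪f - fδ, w k⟫ ^ 2 := Finset.sum_le_sum h1
      _ = μ (N - 1) ^ 2 * ∑ k ∈ Finset.range N, ⟪f - fδ, w k⟫ ^ 2 := by
          rw [Finset.mul_sum]
      _ ≤ μ (N - 1) ^ 2 * δ ^ 2 := by
          apply mul_le_mul_of_nonneg_left _ (sq_nonneg _)
          refine le_trans hBessel ?_
          exact pow_le_pow_left₀ (norm_nonneg _) hd 2
      _ ≤ μ (N - 1) ^ 2 * (1 / ξ (N - 1)) ^ 2 :=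
          mul_le_mul_of_nonneg_left (pow_le_pow_left₀ hδ.le hδle 2) (sq_nonneg _)
      _ = (μ (N - 1) / ξ (N - 1)) ^ 2 := by
          field_simp
  -- tail estimate
  have htotal : (∑' k, ξ k ^ 2 * ⟪f, w k⟫ ^ 2) ≤ 1 := by
    have h0 : 0 ≤ ∑' k, ξ k ^ 2 * ⟪f, w k⟫ ^ 2 := tsum_nonneg fun k => by positivity
    have := pow_le_pow_left₀ (Real.sqrt_nonneg _) hfW 2
    rwa [Real.sq_sqrt h0, one_pow] at this
  have htailg : (∑' j, ξ (j + N) ^ 2 * ⟪f, w (j + N)⟫ ^ 2) ≤ 1 := by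
    have hsp := Summable.sum_add_tsum_nat_add (f := fun k => ξ k ^ 2 * ⟪f, w k⟫ ^ 2) N hf
    have hh : 0 ≤ ∑ k ∈ Finset.range N, ξ k ^ 2 * ⟪f, w k⟫ ^ 2 :=
      Finset.sum_nonneg fun k _ => by positivity
    linarith
  have htail : (∑' j, a (j + N) ^ 2) ≤ (μ N / ξ N) ^ 2 := by
    have hterm : ∀ j, a (j + N) ^ 2 ≤
        (μ N / ξ N) ^ 2 * (ξ (j + N) ^ 2 * ⟪f, w (j + N)⟫ ^ 2) := by
      intro j
      have hak : a (j + N) = μ (j + N) * ⟪f, w (j + N)⟫ := if_neg (by omega)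
      have hk := (hξpos (j + N)).ne'
      have h1 : (μ (j + N) * ⟪f, w (j + N)⟫) ^ 2 =
          (μ (j + N) / ξ (j + N)) ^ 2 * (ξ (j + N) ^ 2 * ⟪f, w (j + N)⟫ ^ 2) := by
        field_simp
      have h2 : (μ (j + N) / ξ (j + N)) ^ 2 ≤ (μ N / ξ N) ^ 2 :=
        pow_le_pow_left₀ (div_nonneg (hμpos _).le (hξpos _).le) (hanti (by omega)) 2
      rw [hak, h1]
      exact mul_le_mul_of_nonneg_right h2 (by positivity)
    have hrs : Summable fun j => (μ N / ξ N) ^ 2 * (ξ (j + N) ^ 2 * ⟪f, w (j + N)⟫ ^ 2) :=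
      ((summable_nat_add_iff N).mpr hf).mul_left _
    calc (∑' j, a (j + N) ^ 2)
        ≤ ∑' j, (μ N / ξ N) ^ 2 * (ξ (j + N) ^ 2 * ⟪f, w (j + N)⟫ ^ 2) :=
          Summable.tsum_le_tsum hterm ((summable_nat_add_iff N).mpr hsum) hrs
      _ = (μ N / ξ N) ^ 2 * ∑' j, ξ (j + N) ^ 2 * ⟪f, w (j + N)⟫ ^ 2 := tsum_mul_left
      _ ≤ (μ N / ξ N) ^ 2 * 1 := mul_le_mul_of_nonneg_left htailg (sq_nonneg _)
      _ = (μ N / ξ N) ^ 2 := mul_one _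
  have hfinal : ‖e‖ ^ 2 ≤ (μ N / ξ N) ^ 2 + (μ (N - 1) / ξ (N - 1)) ^ 2 := by
    rw [hnorm, hsplit]; linarith
  have := Real.sqrt_le_sqrt hfinal
  rwa [Real.sqrt_sq (norm_nonneg e)] at this

lemma inner_single (w : ℕ → H) (hw_on : Orthonormal ℝ w) (N : ℕ) (c : ℝ) (k : ℕ) :
    ⟪c • w N, w k⟫ = if N = k then c else 0 := by
  rw [real_inner_smul_left, orthonormal_iff_ite.mp hw_on N k]
  by_cases h : N = k <;> simp [h]

lemma memW_single (w : ℕ → H) (hw_on : Orthonormal ℝ w) (ξ : ℕ → ℝ) (N : ℕ) (c : ℝ) :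
    MemW w ξ (c • w N) := by
  rw [MemW]
  apply summable_of_ne_finset_zero (s := {N})
  intro k hk
  rw [Finset.mem_singleton] at hk
  rw [inner_single w hw_on, if_neg (Ne.symm hk)]
  ring

lemma normW_single (w : ℕ → H) (hw_on : Orthonormal ℝ w) (ξ : ℕ → ℝ) (N : ℕ) (c : ℝ) :
    normW w ξ (c • w N) = Real.sqrt (ξ N ^ 2 * c ^ 2) := by
  rw [normW]
  congr 1
  rw [tsum_eq_single N]
  · rw [inner_single w hw_on, if_pos rfl]
  · intro k hk
    rw [inner_single w hw_on, if_neg (Ne.symm hk)]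
    ring

lemma opA_single (w : ℕ → H) (hw_on : Orthonormal ℝ w) (μ : ℕ → ℝ) (N : ℕ) (c : ℝ) :
    opA w μ (c • w N) = (μ N * c) • w N := by
  rw [opA]
  rw [tsum_eq_single N]
  · rw [inner_single w hw_on, if_pos rfl]
  · intro k hk
    rw [inner_single w hw_on, if_neg (Ne.symm hk)]
    simp

lemma le_recErr (w : ℕ → H) (μ ξ : ℕ → ℝ) (δ : ℝ) {N' : ℕ}
    (G : H → Fin N' → ℝ) (Ψ : (Fin N' → ℝ) → H) (f fδ : H)
    (hP : MemW w ξ f ∧ normW w ξ f ≤ 1) (hQ : ‖f - fδ‖ ≤ δ) :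
    ENNReal.ofReal ‖opA w μ f - Ψ (G fδ)‖ ≤ recErr w μ ξ δ G Ψ :=
  le_iSup_of_le f (le_iSup_of_le hP (le_iSup_of_le fδ (le_iSup_of_le hQ le_rfl)))

lemma lowerBound (w : ℕ → H) (hw_on : Orthonormal ℝ w) (μ ξ : ℕ → ℝ) (N : ℕ)
    (hμN : 0 ≤ μ N) (hξN : 0 < ξ N) (δ : ℝ) (hδ : 0 < δ) (hN : 1 / δ ≤ ξ N)
    {N' : ℕ} (G : H → Fin N' → ℝ) (Ψ : (Fin N' → ℝ) → H) :
    ENNReal.ofReal (μ N / ξ N) ≤ recErr w μ ξ δ G Ψ := by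
  set c : ℝ := (ξ N)⁻¹ with hcdef
  have hc : 0 < c := inv_pos.mpr hξN
  have hcδ : c ≤ δ := by
    rw [hcdef, inv_eq_one_div, div_le_iff₀ hξN, mul_comm]
    exact (div_le_iff₀ hδ).mp hN
  have hsq : ∀ d : ℝ, ξ N ^ 2 * (d * c) ^ 2 = d ^ 2 := by
    intro d
    have h := hξN.ne'
    rw [hcdef]
    field_simp
  have hP : MemW w ξ (c • w N) ∧ normW w ξ (c • w N) ≤ 1 := by
    refine ⟨memW_single w hw_on ξ N c, ?_⟩
    rw [normW_single w hw_on ξ N c]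
    have : ξ N ^ 2 * c ^ 2 = 1 := by have := hsq 1; simpa using this
    rw [this, Real.sqrt_one]
  have hPneg : MemW w ξ ((-c) • w N) ∧ normW w ξ ((-c) • w N) ≤ 1 := by
    refine ⟨memW_single w hw_on ξ N (-c), ?_⟩
    rw [normW_single w hw_on ξ N (-c)]
    have : ξ N ^ 2 * (-c) ^ 2 = 1 := by have h := hsq 1; rw [one_mul] at h; nlinarith [h]
    rw [this, Real.sqrt_one]
  have hwN : ‖w N‖ = 1 := hw_on.1 N
  have hfδ : ‖c • w N - 0‖ ≤ δ := by
    rw [sub_zero, norm_smul, hwN, mul_one, Real.norm_eq_abs, abs_of_pos hc]; exact hcδ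
  have hfδ' : ‖(-c) • w N - 0‖ ≤ δ := by
    rw [sub_zero, norm_smul, hwN, mul_one, Real.norm_eq_abs, abs_neg, abs_of_pos hc]
    exact hcδ
  have h1 := le_recErr w μ ξ δ G Ψ (c • w N) 0 hP hfδ
  have h2 := le_recErr w μ ξ δ G Ψ ((-c) • w N) 0 hPneg hfδ'
  rw [opA_single w hw_on] at h1 h2
  set y := Ψ (G 0) with hy
  set x := (μ N * c) • w N with hx
  have hneg : (μ N * (-c)) • w N = -x := by rw [hx, mul_neg, neg_smul]
  rw [hneg] at h2
  have hxn : ‖x‖ = μ N / ξ N := by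
    rw [hx, norm_smul, hwN, mul_one, Real.norm_eq_abs,
      abs_of_nonneg (mul_nonneg hμN hc.le), hcdef, div_eq_mul_inv]
  have key : ‖x‖ ≤ max ‖x - y‖ ‖-x - y‖ := by
    have h3 : ‖(x - y) - (-x - y)‖ ≤ ‖x - y‖ + ‖-x - y‖ := norm_sub_le _ _
    have h4 : (x - y) - (-x - y) = (2 : ℝ) • x := by
      rw [two_smul]; abel
    rw [h4, norm_smul] at h3
    simp only [Real.norm_ofNat] at h3
    rcases le_total ‖x - y‖ ‖-x - y‖ with h | h
    · rw [max_eq_right h]; linarith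
    · rw [max_eq_left h]; linarith
  rw [← hxn]
  rcases le_total ‖x - y‖ ‖-x - y‖ with h | h
  · rw [max_eq_right h] at key
    exact le_trans (ENNReal.ofReal_le_ofReal key) h2
  · rw [max_eq_left h] at key
    exact le_trans (ENNReal.ofReal_le_ofReal key) h1

/-- optimality chain for the choice `N = N_δ`. -/
theorem stmt9
    (w : ℕ → H) (hw_on : Orthonormal ℝ w)
    (hw_dense : Dense (Submodule.span ℝ (Set.range w) : Set H))
    (μ ξ : ℕ → ℝ)
    (hμ0 : 0 < μ 0) (hμmono : Monotone μ) (hμtop : Tendsto μ atTop atTop)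
    (hξ0 : 0 < ξ 0) (hξmono : Monotone ξ) (hξtop : Tendsto ξ atTop atTop)
    (hratio : Tendsto (fun k => μ k / ξ k) atTop (nhds 0))
    (hanti : Antitone fun k => μ k / ξ k) :
    ∀ δ : ℝ, 0 < δ → δ < 1 / ξ 0 →
      ENNReal.ofReal (μ (Ncrit ξ δ) / ξ (Ncrit ξ δ)) ≤ RoptAll w μ ξ δ ∧
        RoptAll w μ ξ δ ≤ Ropt w μ ξ δ (Ncrit ξ δ) ∧
          Ropt w μ ξ δ (Ncrit ξ δ) ≤
            recErr w μ ξ δ (Gtrunc w (Ncrit ξ δ)) (Psitrunc w μ (Ncrit ξ δ)) ∧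
            recErr w μ ξ δ (Gtrunc w (Ncrit ξ δ)) (Psitrunc w μ (Ncrit ξ δ)) ≤
              ENNReal.ofReal (Real.sqrt
                ((μ (Ncrit ξ δ) / ξ (Ncrit ξ δ)) ^ 2 +
                  (μ (Ncrit ξ δ - 1) / ξ (Ncrit ξ δ - 1)) ^ 2)) := by
  intro δ hδ hδξ
  have hξpos : ∀ k, 0 < ξ k := fun k => lt_of_lt_of_le hξ0 (hξmono (Nat.zero_le k))
  have hμpos : ∀ k, 0 < μ k := fun k => lt_of_lt_of_le hμ0 (hμmono (Nat.zero_le k))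
  set N := Ncrit ξ δ with hNdef
  have hset : {n : ℕ | 1 / δ ≤ ξ n}.Nonempty := by
    obtain ⟨n, hn⟩ := (hξtop.eventually_ge_atTop (1 / δ)).exists
    exact ⟨n, hn⟩
  have hNinf : N = sInf {n : ℕ | 1 / δ ≤ ξ n} := by rw [hNdef, Ncrit]
  have hNmem : 1 / δ ≤ ξ N := by
    have := Nat.sInf_mem hset
    rw [← hNinf] at this
    exact this
  have hNpos : 0 < N := by
    rcases Nat.eq_zero_or_pos N with h0 | h
    · exfalso
      have h2 : 1 / δ ≤ ξ 0 := h0 ▸ hNmem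
      have h1 : ξ 0 < 1 / δ := by
        rw [lt_div_iff₀ hδ]
        have h3 := (lt_div_iff₀ hξ0).mp hδξ
        have h4 : δ * ξ 0 = ξ 0 * δ := mul_comm _ _
        linarith
      linarith
    · exact h
  have hNm1 : ξ (N - 1) < 1 / δ := by
    have hlt : N - 1 < sInf {n : ℕ | 1 / δ ≤ ξ n} := by omega
    have h := Nat.notMem_of_lt_sInf hlt
    simpa using not_le.mp (by simpa using h)
  have hδle : δ ≤ 1 / ξ (N - 1) := by
    rw [le_div_iff₀ (hξpos (N - 1))]
    have h1 := (lt_div_iff₀ hδ).mp hNm1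
    have h2 : δ * ξ (N - 1) = ξ (N - 1) * δ := mul_comm _ _
    linarith
  refine ⟨?_, ?_, ?_, ?_⟩
  · rw [RoptAll]
    refine le_iInf fun N' => ?_
    rw [Ropt]
    refine le_iInf fun G => le_iInf fun _ => le_iInf fun Ψ => ?_
    exact lowerBound w hw_on μ ξ N (hμpos N).le (hξpos N) δ hδ hNmem G Ψ
  · exact iInf_le _ N
  · rw [Ropt]
    have hG : Continuous (Gtrunc w N) :=
      continuous_pi fun k => Continuous.inner continuous_id continuous_const
    exact iInf_le_of_le (Gtrunc w N) (iInf_le_of_le hG (iInf_le _ (Psitrunc w μ N)))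
  · rw [recErr]
    refine iSup_le fun f => iSup_le fun hP => iSup_le fun fδ => iSup_le fun hQ => ?_
    exact ENNReal.ofReal_le_ofReal
      (errBound w hw_on hw_dense μ ξ hμmono hμpos hξpos hanti N hNpos δ hδ hδle
        f fδ hP.1 hP.2 hQ)
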